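/- Let A be an abelian group fitting into an exact sequence 0 → A/ℓⁿA → Hₙ → Bₙ → 0 for each n, compatible with projections, where Hₙ are finite abelian groups of ℓ-power order. If A is finitely generated, then after taking inverse limits one obtains an injection A ⊗ ℤ_ℓ → lim Hₙ, and hence rank_ℤ(A) ≤ rank_{ℤ_ℓ}(lim Hₙ). -/

import Mathlib

/-!
Let `ℓ` be a prime and `A` a finitely generated abelian group together with compatible
injections `A/ℓⁿA → Hₙ` into an inverse system `(Hₙ)` of finite abelian groups of
`ℓ`-power order (finite `ℤ_ℓ`-modules).  Then taking inverse limits yields an injection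
`A ⊗ ℤ_ℓ → lim Hₙ`, and hence `rank_ℤ A ≤ rank_{ℤ_ℓ} (lim Hₙ)`.
-/

open TensorProduct

/-- The inverse limit of an inverse system of `ℤ_ℓ`-modules, as a submodule of the
product. -/
def padicInvLim (ℓ : ℕ) [Fact ℓ.Prime] (H : ℕ → Type) [∀ n, AddCommGroup (H n)]
    [∀ n, Module ℤ_[ℓ] (H n)] (g : ∀ n, H (n + 1) →ₗ[ℤ_[ℓ]] H n) :
    Submodule ℤ_[ℓ] (∀ n, H n) where
  carrier := {x | ∀ n, g n (x (n + 1)) = x n}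
  add_mem' {x y} hx hy := fun n => by simp [hx n, hy n]
  zero_mem' := fun n => by simp
  smul_mem' c x hx := fun n => by simp [hx n]

/-- A finite `ℤ_ℓ`-module is killed by a power of `ℓ`. -/
lemma padic_kill (ℓ : ℕ) [hℓ : Fact ℓ.Prime] (H : Type) [AddCommGroup H] [Module ℤ_[ℓ] H]
    [Finite H] : ∃ k : ℕ, ∀ h : H, ((ℓ : ℤ_[ℓ]) ^ k) • h = 0 := by
  have hone : ∀ h : H, ∃ k : ℕ, ((ℓ : ℤ_[ℓ]) ^ k) • h = 0 := by
    intro h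
    set d := addOrderOf h with hd
    have hdpos : d ≠ 0 := (addOrderOf_pos h).ne'
    set v := d.factorization ℓ with hv
    set m := d / ℓ ^ v with hm
    have hfac : ℓ ^ v * m = d := Nat.ordProj_mul_ordCompl_eq_self d ℓ
    have hmdvd : ¬ ℓ ∣ m := Nat.not_dvd_ordCompl hℓ.out hdpos
    have hmunit : IsUnit (m : ℤ_[ℓ]) := by
      rw [PadicInt.isUnit_iff]
      refine le_antisymm (PadicInt.norm_le_one _) (not_lt.mp fun hlt => hmdvd ?_)
      have : ((m : ℤ) : ℤ_[ℓ]) = (m : ℤ_[ℓ]) := by push_cast; ring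
      rw [← this] at hlt
      exact_mod_cast (PadicInt.norm_int_lt_one_iff_dvd (m : ℤ)).mp hlt
    have hdh : (d : ℤ_[ℓ]) • h = 0 := by
      rw [Nat.cast_smul_eq_nsmul]
      exact addOrderOf_nsmul_eq_zero h
    have hsplit : (m : ℤ_[ℓ]) • (((ℓ : ℤ_[ℓ]) ^ v) • h) = 0 := by
      rw [smul_smul, mul_comm]
      have : (ℓ : ℤ_[ℓ]) ^ v * (m : ℤ_[ℓ]) = (d : ℤ_[ℓ]) := by
        rw [← hfac]; push_cast; ring
      rw [this]; exact hdh
    refine ⟨v, ?_⟩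
    have := hmunit.smul_left_cancel (x := ((ℓ : ℤ_[ℓ]) ^ v) • h) (y := (0 : H))
    rw [smul_zero] at this
    exact this.mp hsplit
  haveI : Fintype H := Fintype.ofFinite H
  choose K hK using hone
  refine ⟨Finset.univ.sup K, fun h => ?_⟩
  have hle : K h ≤ Finset.univ.sup K := Finset.le_sup (Finset.mem_univ h)
  rw [← Nat.sub_add_cancel hle, pow_add, mul_smul, hK h, smul_zero]

/-- Every element of `ℤ_ℓ ⊗ A` is congruent mod `ℓ^m` to an element of the form `1 ⊗ a`. -/
lemma padic_approx (ℓ : ℕ) [Fact ℓ.Prime] (A : Type) [AddCommGroup A] (m : ℕ)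
    (x : ℤ_[ℓ] ⊗[ℤ] A) :
    ∃ (a : A) (y : ℤ_[ℓ] ⊗[ℤ] A), x = (1 : ℤ_[ℓ]) ⊗ₜ[ℤ] a + ((ℓ : ℤ_[ℓ]) ^ m) • y := by
  induction x using TensorProduct.induction_on with
  | zero => exact ⟨0, 0, by simp⟩
  | tmul c a =>
      obtain ⟨d, hd⟩ := Ideal.mem_span_singleton'.mp (PadicInt.appr_spec m c)
      refine ⟨(c.appr m) • a, d ⊗ₜ[ℤ] a, ?_⟩
      have h1 : (1 : ℤ_[ℓ]) ⊗ₜ[ℤ] ((c.appr m) • a) = ((c.appr m : ℤ_[ℓ])) ⊗ₜ[ℤ] a := by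
        rw [TensorProduct.tmul_smul, TensorProduct.smul_tmul', nsmul_eq_mul, mul_one]
      have hc : c = (c.appr m : ℤ_[ℓ]) + (ℓ : ℤ_[ℓ]) ^ m * d := by
        linear_combination -hd
      rw [h1, TensorProduct.smul_tmul', smul_eq_mul, ← TensorProduct.add_tmul, ← hc]
  | add x y hx hy =>
      obtain ⟨a, u, ha⟩ := hx
      obtain ⟨b, w, hb⟩ := hy
      exact ⟨a + b, u + w, by rw [ha, hb, TensorProduct.tmul_add, smul_add]; abel⟩

theorem tensor_padic_injects_into_invLim
    (ℓ : ℕ) [Fact ℓ.Prime]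
    (A : Type) [AddCommGroup A] (hA : AddGroup.FG A)
    (H : ℕ → Type) [∀ n, AddCommGroup (H n)] [∀ n, Module ℤ_[ℓ] (H n)]
    [∀ n, Finite (H n)]
    (g : ∀ n, H (n + 1) →ₗ[ℤ_[ℓ]] H n)
    -- the injections `A/ℓⁿA → Hₙ`
    (f : ∀ n, (A ⧸ LinearMap.range (((ℓ : ℤ) ^ n) • (LinearMap.id : A →ₗ[ℤ] A))) →+ H n)
    (hinj : ∀ n, Function.Injective (f n))
    -- compatibility with the transition maps and the projections `A/ℓ^{n+1}A → A/ℓⁿA`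
    (hcompat : ∀ n (x : A),
      g n (f (n + 1) (Submodule.Quotient.mk x)) = f n (Submodule.Quotient.mk x)) :
    ∃ φ : (ℤ_[ℓ] ⊗[ℤ] A) →ₗ[ℤ_[ℓ]] padicInvLim ℓ H g,
      Function.Injective φ ∧
        Module.rank ℤ A ≤ Module.rank ℤ_[ℓ] (padicInvLim ℓ H g) := by
  haveI : Module.Finite ℤ A := Module.Finite.iff_addGroup_fg.mpr hA
  -- the compatible system of maps `A → Hₙ`, as a map into the inverse limit
  let ψ0 : A →+ (padicInvLim ℓ H g) :=
    { toFun := fun a => ⟨fun n => f n (Submodule.Quotient.mk a), fun n => hcompat n a⟩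
      map_zero' := by
        apply Subtype.ext; funext n
        simp
      map_add' := fun a b => by
        apply Subtype.ext; funext n
        simp [Submodule.Quotient.mk_add] }
  let ψ : A →ₗ[ℤ] (padicInvLim ℓ H g) := ψ0.toIntLinearMap
  let φ : (ℤ_[ℓ] ⊗[ℤ] A) →ₗ[ℤ_[ℓ]] padicInvLim ℓ H g := ψ.liftBaseChange ℤ_[ℓ]
  have hφ0 : ∀ x, φ x = 0 → x = 0 := by
    intro x hx
    have hmem : ∀ n, x ∈ (Ideal.span {(ℓ : ℤ_[ℓ])}) ^ n •
        (⊤ : Submodule ℤ_[ℓ] (ℤ_[ℓ] ⊗[ℤ] A)) := by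
      intro n
      obtain ⟨k, hk⟩ := padic_kill ℓ (H n)
      obtain ⟨a, y, hxy⟩ := padic_approx ℓ A (n + k) x
      have hcoord : f n (Submodule.Quotient.mk a) = 0 := by
        have h1 : φ x = 0 := hx
        rw [hxy, map_add, map_smul] at h1
        have h2 : φ ((1 : ℤ_[ℓ]) ⊗ₜ[ℤ] a) = ψ0 a := by
          simp [φ, LinearMap.liftBaseChange_tmul, ψ]
        rw [h2] at h1
        have h5 := congrArg (fun z : padicInvLim ℓ H g => (z : ∀ n, H n) n) h1
        simp only [Submodule.coe_add, Pi.add_apply, ZeroMemClass.coe_zero, Pi.zero_apply,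
          SetLike.val_smul, Pi.smul_apply] at h5
        have h4 : (ℓ : ℤ_[ℓ]) ^ (n + k) • ((φ y : padicInvLim ℓ H g) : ∀ n, H n) n = 0 := by
          rw [pow_add, mul_smul, hk, smul_zero]
        rw [h4, add_zero] at h5
        exact h5
      have hmk : (Submodule.Quotient.mk a :
          A ⧸ LinearMap.range (((ℓ : ℤ) ^ n) • (LinearMap.id : A →ₗ[ℤ] A))) = 0 := by
        apply hinj n
        rw [hcoord, map_zero]
      obtain ⟨b, hb⟩ := (Submodule.Quotient.mk_eq_zero _).mp hmk
      have hb' : ((ℓ : ℤ) ^ n) • b = a := hb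
      have hx1 : (1 : ℤ_[ℓ]) ⊗ₜ[ℤ] a = (ℓ : ℤ_[ℓ]) ^ n • ((1 : ℤ_[ℓ]) ⊗ₜ[ℤ] b) := by
        rw [← hb', TensorProduct.tmul_smul, ← Int.cast_smul_eq_zsmul (R := ℤ_[ℓ])]
        push_cast
        ring_nf
      have hxfinal : x = (ℓ : ℤ_[ℓ]) ^ n • ((1 : ℤ_[ℓ]) ⊗ₜ[ℤ] b)
          + (ℓ : ℤ_[ℓ]) ^ n • ((ℓ : ℤ_[ℓ]) ^ k • y) := by
        rw [hxy, hx1, smul_smul, ← pow_add]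
      rw [Ideal.span_singleton_pow, hxfinal]
      exact Submodule.add_mem _
        (Submodule.smul_mem_smul (Ideal.mem_span_singleton_self _) trivial)
        (Submodule.smul_mem_smul (Ideal.mem_span_singleton_self _) trivial)
    have hbot : x ∈ (⊥ : Submodule ℤ_[ℓ] (ℤ_[ℓ] ⊗[ℤ] A)) := by
      have hne : (Ideal.span {(ℓ : ℤ_[ℓ])}) ≠ ⊤ :=
        Ideal.span_singleton_ne_top (mem_nonunits_iff.mp PadicInt.p_nonunit)
      rw [← Ideal.iInf_pow_smul_eq_bot_of_isLocalRing
        (I := Ideal.span {(ℓ : ℤ_[ℓ])}) (M := ℤ_[ℓ] ⊗[ℤ] A) hne]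
      exact (Submodule.mem_iInf _).mpr hmem
    simpa using hbot
  have hφinj : Function.Injective φ := LinearMap.ker_eq_bot.mp (LinearMap.ker_eq_bot'.mpr hφ0)
  refine ⟨φ, hφinj, ?_⟩
  -- rank inequality
  obtain ⟨s, hs⟩ := Module.projective_lifting_property (Submodule.torsion ℤ A).mkQ
    LinearMap.id (Submodule.mkQ_surjective _)
  set Q := A ⧸ Submodule.torsion ℤ A with hQ
  let b := Module.Free.chooseBasis ℤ Q
  let v : Module.Free.ChooseBasisIndex ℤ Q → A := fun i => s (b i)
  have hbc : LinearIndependent ℤ_[ℓ] fun i => (1 : ℤ_[ℓ]) ⊗ₜ[ℤ] v i := by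
    apply LinearIndependent.of_comp ((Submodule.torsion ℤ A).mkQ.baseChange ℤ_[ℓ])
    have h2 : (((Submodule.torsion ℤ A).mkQ.baseChange ℤ_[ℓ]) ∘
        fun i => (1 : ℤ_[ℓ]) ⊗ₜ[ℤ] v i) = fun i => (b.baseChange ℤ_[ℓ]) i := by
      funext i
      have hsb : (Submodule.torsion ℤ A).mkQ (s (b i)) = b i := LinearMap.congr_fun hs (b i)
      simp [LinearMap.baseChange_tmul, Module.Basis.baseChange_apply, v, hsb]
    rw [h2]
    exact (b.baseChange ℤ_[ℓ]).linearIndependent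
  have hLI : LinearIndependent ℤ_[ℓ] fun i => φ ((1 : ℤ_[ℓ]) ⊗ₜ[ℤ] v i) :=
    hbc.map' φ (LinearMap.ker_eq_bot.mpr hφinj)
  calc Module.rank ℤ A = Module.rank ℤ Q := (rank_quotient_eq_of_le_torsion le_rfl).symm
    _ = Cardinal.mk (Module.Free.ChooseBasisIndex ℤ Q) :=
        Module.Free.rank_eq_card_chooseBasisIndex ℤ Q
    _ ≤ Module.rank ℤ_[ℓ] (padicInvLim ℓ H g) := hLI.cardinal_le_rank
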